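/- arXiv:0805.0726 — 7 statements merged into one kernel-verified Lean document; each statement's English description precedes it below -/
import Mathlib

section
/- In an SP-structure satisfying Symmetry, Non-negativity, Boundedness, and O-Projection, p(x,x) = 1 for every state x. -/
variable {Ω : Type*}

def IsOrtho (p : Ω → Ω → ℝ) (A : Set Ω) : Prop :=
  ∀ x ∈ A, ∀ y ∈ A, x ≠ y → p x y = 0

noncomputable def pSet (p : Ω → Ω → ℝ) (x : Ω) (A : Set Ω) : ℝ :=
  ∑' a : A, p x a

def Symm (p : Ω → Ω → ℝ) : Prop := ∀ x y, p x y = p y x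

def Nonneg (p : Ω → Ω → ℝ) : Prop := ∀ x y, 0 ≤ p x y

def Bounded (p : Ω → Ω → ℝ) : Prop :=
  ∀ (x : Ω) (A : Set Ω), IsOrtho p A →
    Summable (fun a : A => p x a) ∧ pSet p x A ≤ 1

def OProj (p : Ω → Ω → ℝ) : Prop :=
  ∀ (x : Ω) (A : Set Ω), IsOrtho p A → pSet p x A < 1 →
    ∃ y, pSet p y A = 0 ∧ pSet p x A + p x y = 1

def Factor (p : Ω → Ω → ℝ) : Prop :=
  ∀ (x y z : Ω) (A : Set Ω), IsOrtho p A → pSet p y A = 1 → pSet p z A = 1 →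
    p x y = pSet p x A → p x z = p x y * p y z

def Subgen (p : Ω → Ω → ℝ) (A : Set Ω) : Set Ω := {x | pSet p x A = 1}

def IsSubspace (p : Ω → Ω → ℝ) (X : Set Ω) : Prop :=
  ∃ A, IsOrtho p A ∧ X = Subgen p A

def Standard (p : Ω → Ω → ℝ) : Prop := ∀ x y, p x y = 1 → x = y

theorem stmt2 (p : Ω → Ω → ℝ) (h1 : Symm p) (h2 : Nonneg p) (h3 : Bounded p)
    (h4 : OProj p) : ∀ x : Ω, p x x = 1 := by
  intro x
  have hortho : IsOrtho p ({x} : Set Ω) := by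
    intro a ha b hb hab
    simp only [Set.mem_singleton_iff] at ha hb
    exact absurd (ha.trans hb.symm) hab
  have hps : ∀ z : Ω, pSet p z ({x} : Set Ω) = p z x := by
    intro z
    simpa [pSet] using tsum_singleton x (p z)
  by_contra hne
  have hlt : pSet p x ({x} : Set Ω) < 1 := by
    rw [hps]
    exact lt_of_le_of_ne (by rw [← hps x]; exact (h3 x {x} hortho).2) hne
  obtain ⟨z, hz0, hz1⟩ := h4 x {x} hortho hlt
  rw [hps] at hz0 hz1
  rw [h1 x z, hz0, add_zero] at hz1
  exact hne hz1
end

section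
/- In an SP-structure satisfying Symmetry, Non-negativity, and Boundedness, if A and B are ortho-sets with B contained in the subspace generated by A and A is finite, then B is finite and |B| ≤ |A|. -/
variable {Ω : Type*}

theorem stmt3 (p : Ω → Ω → ℝ) (h1 : Symm p) (h2 : Nonneg p) (h3 : Bounded p)
    (hrefl : ∀ x, p x x = 1)
    (A B : Set Ω) (hA : IsOrtho p A) (hB : IsOrtho p B)
    (hBA : B ⊆ Subgen p A) (hfin : A.Finite) :
    B.Finite ∧ B.ncard ≤ A.ncard := by
  classical
  set As : Finset Ω := hfin.toFinset with hAs
  -- key: any finset inside B has card ≤ As.card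
  have key : ∀ s : Finset Ω, ↑s ⊆ B → s.card ≤ As.card := by
    intro s hs
    have hsum1 : ∀ b ∈ s, ∑ a ∈ As, p b a = 1 := by
      intro b hb
      have hb1 : pSet p b A = 1 := hBA (hs hb)
      have : pSet p b A = ∑ a ∈ As, p b a := by
        rw [pSet, ← hfin.coe_toFinset, Finset.tsum_subtype']
      linarith [this ▸ hb1]
    have hsOrtho : IsOrtho p (↑s : Set Ω) := fun x hx y hy hxy =>
      hB x (hs hx) y (hs hy) hxy
    have hbd : ∀ a : Ω, ∑ b ∈ s, p a b ≤ 1 := by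
      intro a
      have h := (h3 a (↑s) hsOrtho).2
      have : pSet p a (↑s) = ∑ b ∈ s, p a b := Finset.tsum_subtype' s (p a)
      linarith [this ▸ h]
    have : (s.card : ℝ) ≤ As.card := by
      calc (s.card : ℝ) = ∑ b ∈ s, ∑ a ∈ As, p b a := by
            rw [Finset.sum_congr rfl hsum1]; simp
        _ = ∑ a ∈ As, ∑ b ∈ s, p a b := by
            rw [Finset.sum_comm]
            exact Finset.sum_congr rfl fun a _ => Finset.sum_congr rfl fun b _ => h1 _ _
        _ ≤ ∑ _a ∈ As, (1 : ℝ) := Finset.sum_le_sum fun a _ => hbd a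
        _ = As.card := by simp
    exact_mod_cast this
  have hBfin : B.Finite := by
    by_contra h
    obtain ⟨s, hsB, hscard⟩ :=
      Set.Infinite.exists_subset_card_eq (s := B) h (As.card + 1)
    have := key s hsB
    omega
  refine ⟨hBfin, ?_⟩
  have := key hBfin.toFinset (by simp)
  rwa [← Set.ncard_eq_toFinset_card B hBfin, ← Set.ncard_eq_toFinset_card A hfin] at this
end

section
/- In an SP-structure satisfying Symmetry, Non-negativity, Boundedness, and O-Projection, every ortho-set A can be extended to a basis, i.e., there exists an ortho-set B ⊇ A such that p(x,B) = 1 for every state x ∈ Ω. -/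
variable {Ω : Type*}

/-- If `p x · ` is nonneg and the sum over an ortho-set is zero, each term is zero. -/
lemma term_eq_zero_of_pSet_zero (p : Ω → Ω → ℝ) (h2 : Nonneg p) (h3 : Bounded p)
    {B : Set Ω} (hB : IsOrtho p B) {x : Ω} (hx : pSet p x B = 0)
    {b : Ω} (hb : b ∈ B) : p x b = 0 := by
  have hs := (h3 x B hB).1
  have hle : p x b ≤ pSet p x B := Summable.le_tsum hs ⟨b, hb⟩ (fun c _ => h2 x c)
  have := h2 x b
  linarith [hx ▸ hle]

theorem stmt4 (p : Ω → Ω → ℝ) (h1 : Symm p) (h2 : Nonneg p) (h3 : Bounded p)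
    (h4 : OProj p) (A : Set Ω) (hA : IsOrtho p A) :
    ∃ B : Set Ω, A ⊆ B ∧ IsOrtho p B ∧ ∀ x : Ω, pSet p x B = 1 := by
  obtain ⟨B, hAB, hBmem, hBmax⟩ :=
    zorn_subset_nonempty {C : Set Ω | IsOrtho p C}
      (fun c hc hchain _ => by
        refine ⟨⋃₀ c, ?_, fun s hs => Set.subset_sUnion_of_mem hs⟩
        intro x hx y hy hxy
        obtain ⟨s, hs, hxs⟩ := hx
        obtain ⟨t, ht, hyt⟩ := hy
        rcases hchain.total hs ht with h | h
        · exact hc ht x (h hxs) y hyt hxy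
        · exact hc hs x hxs y (h hyt) hxy) A hA
  refine ⟨B, hAB, hBmem, fun x => ?_⟩
  by_contra hne
  have hlt : pSet p x B < 1 := lt_of_le_of_ne ((h3 x B hBmem).2) hne
  obtain ⟨y, hy0, hysum⟩ := h4 x B hBmem hlt
  have hxy : p x y = 1 - pSet p x B := by linarith
  have hxypos : 0 < p x y := by linarith
  -- y ∉ B
  have hyB : y ∉ B := by
    intro hyB
    have hylt : pSet p y B < 1 := by rw [hy0]; norm_num
    obtain ⟨z, hz0, hzsum⟩ := h4 y B hBmem hylt
    have hzy : p z y = 0 := term_eq_zero_of_pSet_zero p h2 h3 hBmem hz0 hyB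
    have : p y z = 1 := by rw [hy0] at hzsum; linarith
    rw [h1 y z] at this
    linarith [hzy ▸ this]
  -- B ∪ {y} is ortho
  have hortho : IsOrtho p (B ∪ {y}) := by
    intro a ha b hb hab
    rcases ha with ha | ha <;> rcases hb with hb | hb
    · exact hBmem a ha b hb hab
    · rw [Set.mem_singleton_iff] at hb; subst hb
      rw [h1]; exact term_eq_zero_of_pSet_zero p h2 h3 hBmem hy0 ha
    · rw [Set.mem_singleton_iff] at ha; subst ha
      exact term_eq_zero_of_pSet_zero p h2 h3 hBmem hy0 hb
    · rw [Set.mem_singleton_iff] at ha hb; subst ha; subst hb; exact absurd rfl hab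
  have := hBmax hortho Set.subset_union_left
  exact hyB (this (Set.mem_union_right _ rfl))
end

section
/- In an SP-structure satisfying Symmetry, Non-negativity, Boundedness, and O-Projection, for every subspace X the set X^⊥ = {x ∈ Ω : p(x,y) = 0 for all y ∈ X} is a subspace, and (X^⊥)^⊥ = X. -/
variable {Ω : Type*}

def Perp (p : Ω → Ω → ℝ) (X : Set Ω) : Set Ω := {x | ∀ y ∈ X, p x y = 0}

/-! ### Auxiliary lemmas -/

lemma isOrtho_subset {p : Ω → Ω → ℝ} {A B : Set Ω} (h : IsOrtho p B) (hAB : A ⊆ B) :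
    IsOrtho p A := fun x hx y hy hxy => h x (hAB hx) y (hAB hy) hxy

lemma pSet_singleton (p : Ω → Ω → ℝ) (x y : Ω) : pSet p x {y} = p x y := by
  simpa [pSet] using tsum_singleton y (p x)

lemma isOrtho_singleton (p : Ω → Ω → ℝ) (y : Ω) : IsOrtho p ({y} : Set Ω) := by
  intro a ha b hb hab
  simp only [Set.mem_singleton_iff] at ha hb
  exact absurd (ha.trans hb.symm) hab

/-- `p x x = 1` for every `x`. -/
lemma p_self (p : Ω → Ω → ℝ) (h1 : Symm p) (h3 : Bounded p) (h4 : OProj p) (x : Ω) :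
    p x x = 1 := by
  rcases lt_or_eq_of_le ((pSet_singleton p x x ▸ (h3 x {x} (isOrtho_singleton p x)).2)) with h | h
  · obtain ⟨y, hy0, hy1⟩ := h4 x {x} (isOrtho_singleton p x) (by rwa [pSet_singleton])
    rw [pSet_singleton] at hy0 hy1
    rw [h1 x y, hy0, add_zero] at hy1
    exact hy1
  · exact h

lemma term_le_pSet (p : Ω → Ω → ℝ) (h2 : Nonneg p) {A : Set Ω}
    (hs : Summable (fun a : A => p x a)) {a : Ω} (ha : a ∈ A) :
    p x a ≤ pSet p x A :=
  Summable.le_tsum hs ⟨a, ha⟩ fun b _ => h2 x b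

lemma pSet_eq_zero_term (p : Ω → Ω → ℝ) (h2 : Nonneg p) {A : Set Ω}
    (hs : Summable (fun a : A => p x a)) (h0 : pSet p x A = 0) {a : Ω} (ha : a ∈ A) :
    p x a = 0 :=
  le_antisymm (h0 ▸ term_le_pSet p h2 hs ha) (h2 x a)

lemma pSet_eq_zero_of_forall (p : Ω → Ω → ℝ) {x : Ω} {A : Set Ω}
    (h : ∀ a ∈ A, p x a = 0) : pSet p x A = 0 := by
  have : (fun a : A => p x a) = fun _ => 0 := funext fun a => h a a.2
  simp [pSet, this]

/-- Each element of an ortho-set generates its span. -/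
lemma mem_subgen_self (p : Ω → Ω → ℝ) (h1 : Symm p) (h3 : Bounded p) (h4 : OProj p)
    {A : Set Ω} (hA : IsOrtho p A) {a : Ω} (ha : a ∈ A) : pSet p a A = 1 := by
  have : pSet p a A = p a a := by
    refine tsum_eq_single (⟨a, ha⟩ : A) ?_
    intro b hb
    exact hA a ha b b.2 (by simpa [eq_comm, Subtype.ext_iff] using (Subtype.coe_ne_coe.mpr hb).symm)
  rw [this, p_self p h1 h3 h4]

lemma pSet_split (p : Ω → Ω → ℝ) (x : Ω) {A B : Set Ω} (hd : Disjoint A B)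
    (hA : Summable (fun a : A => p x a)) (hB : Summable (fun a : B => p x a)) :
    pSet p x (A ∪ B) = pSet p x A + pSet p x B := by
  simpa [pSet] using Summable.tsum_union_disjoint (f := p x) hd hA hB

/-- In a maximal ortho-set, every point has total weight 1. -/
lemma maximal_full (p : Ω → Ω → ℝ) (h1 : Symm p) (h2 : Nonneg p) (h3 : Bounded p)
    (h4 : OProj p) {C : Set Ω} (hC : Maximal (IsOrtho p) C) (x : Ω) :
    pSet p x C = 1 := by
  rcases lt_or_eq_of_le ((h3 x C hC.1).2) with h | h
  · obtain ⟨y, hy0, _⟩ := h4 x C hC.1 h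
    have hyC : y ∉ C := by
      intro hyC
      have := pSet_eq_zero_term p h2 (h3 y C hC.1).1 hy0 hyC
      rw [p_self p h1 h3 h4] at this
      norm_num at this
    have hCy : IsOrtho p (C ∪ {y}) := by
      intro a ha b hb hab
      rcases ha with ha | ha <;> rcases hb with hb | hb
      · exact hC.1 a ha b hb hab
      · rw [Set.mem_singleton_iff] at hb; subst hb
        rw [h1]
        exact pSet_eq_zero_term p h2 (h3 b C hC.1).1 hy0 ha
      · rw [Set.mem_singleton_iff] at ha; subst ha
        exact pSet_eq_zero_term p h2 (h3 a C hC.1).1 hy0 hb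
      · rw [Set.mem_singleton_iff] at ha hb; exact absurd (ha.trans hb.symm) hab
    have := hC.2 hCy Set.subset_union_left
    exact absurd (this (by simp)) hyC
  · exact h

/-- Key lemma: if `C` is a maximal ortho-set and `A ⊆ C`, then
`Perp (Subgen A) = Subgen (C \ A)`. -/
lemma perp_subgen (p : Ω → Ω → ℝ) (h1 : Symm p) (h2 : Nonneg p) (h3 : Bounded p)
    (h4 : OProj p) {C : Set Ω} (hC : Maximal (IsOrtho p) C) {A : Set Ω} (hAC : A ⊆ C) :
    Perp p (Subgen p A) = Subgen p (C \ A) := by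
  have hOA : IsOrtho p A := isOrtho_subset hC.1 hAC
  have hOB : IsOrtho p (C \ A) := isOrtho_subset hC.1 Set.diff_subset
  have hsplit : ∀ x, pSet p x A + pSet p x (C \ A) = 1 := by
    intro x
    rw [← pSet_split p x Set.disjoint_sdiff_right (h3 x A hOA).1 (h3 x (C \ A) hOB).1,
      Set.union_diff_cancel hAC]
    exact maximal_full p h1 h2 h3 h4 hC x
  ext x
  constructor
  · intro hx
    have hxA : pSet p x A = 0 :=
      pSet_eq_zero_of_forall p fun a ha =>
        hx a (mem_subgen_self p h1 h3 h4 hOA ha)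
    have := hsplit x
    rw [hxA, zero_add] at this
    exact this
  · intro hx
    have hxB : pSet p x (C \ A) = 1 := hx
    have hxA : pSet p x A = 0 := by linarith [hsplit x]
    have hxterm : ∀ a ∈ A, p x a = 0 := fun a ha =>
      pSet_eq_zero_term p h2 (h3 x A hOA).1 hxA ha
    have hxnA : x ∉ A := by
      intro hxA'
      have := hxterm x hxA'
      rw [p_self p h1 h3 h4] at this
      norm_num at this
    have hAx : IsOrtho p (A ∪ {x}) := by
      intro a ha b hb hab
      rcases ha with ha | ha <;> rcases hb with hb | hb
      · exact hOA a ha b hb hab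
      · rw [Set.mem_singleton_iff] at hb; subst hb
        rw [h1]; exact hxterm a ha
      · rw [Set.mem_singleton_iff] at ha; subst ha
        exact hxterm b hb
      · rw [Set.mem_singleton_iff] at ha hb; exact absurd (ha.trans hb.symm) hab
    intro y hy
    have hyA : pSet p y A = 1 := hy
    have hle : pSet p y (A ∪ {x}) ≤ 1 := (h3 y (A ∪ {x}) hAx).2
    have heq : pSet p y (A ∪ {x}) = pSet p y A + p y x := by
      rw [pSet_split p y (Set.disjoint_singleton_right.mpr hxnA)
        (h3 y A hOA).1 (h3 y {x} (isOrtho_singleton p x)).1, pSet_singleton]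
    rw [heq, hyA] at hle
    have : p y x ≤ 0 := by linarith
    rw [h1]
    exact le_antisymm this (h2 y x)

/-- Every ortho-set extends to a maximal one. -/
lemma exists_maximal_ortho (p : Ω → Ω → ℝ) {A : Set Ω} (hA : IsOrtho p A) :
    ∃ C, A ⊆ C ∧ Maximal (IsOrtho p) C := by
  obtain ⟨C, hAC, hC⟩ := zorn_subset_nonempty {B | IsOrtho p B}
    (fun c hc hchain _ => by
      refine ⟨⋃₀ c, ?_, fun s hs => Set.subset_sUnion_of_mem hs⟩
      intro x hx y hy hxy
      obtain ⟨s, hs, hxs⟩ := hx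
      obtain ⟨t, ht, hyt⟩ := hy
      rcases hchain.total hs ht with h | h
      · exact (hc ht) x (h hxs) y hyt hxy
      · exact (hc hs) x hxs y (h hyt) hxy) A hA
  exact ⟨C, hAC, hC⟩

theorem stmt5 (p : Ω → Ω → ℝ) (h1 : Symm p) (h2 : Nonneg p) (h3 : Bounded p)
    (h4 : OProj p) (X : Set Ω) (hX : IsSubspace p X) :
    IsSubspace p (Perp p X) ∧ Perp p (Perp p X) = X := by
  obtain ⟨A, hA, rfl⟩ := hX
  obtain ⟨C, hAC, hC⟩ := exists_maximal_ortho p hA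
  have key1 : Perp p (Subgen p A) = Subgen p (C \ A) :=
    perp_subgen p h1 h2 h3 h4 hC hAC
  have key2 : Perp p (Subgen p (C \ A)) = Subgen p (C \ (C \ A)) :=
    perp_subgen p h1 h2 h3 h4 hC Set.diff_subset
  rw [Set.diff_diff_cancel_left hAC] at key2
  exact ⟨⟨C \ A, isOrtho_subset hC.1 Set.diff_subset, key1⟩, by rw [key1, key2]⟩
end

section
/- In an SP-structure satisfying Symmetry, Non-negativity, Boundedness, O-Projection, and Factorization: if p(x,x') < 1, y is a state with p(y,x') = 0 and p(x,x') + p(x,y) = 1, and A is an ortho-set with p(x,A) = 0 and p(x',A) = 0, then p(y,A) = 0. -/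
variable {Ω : Type*}

/-- Auxiliary: tsum over a pair. -/
lemma tsum_pair' {α : Type*} (f : α → ℝ) {a b : α} (h : a ≠ b) :
    ∑' x : ({a, b} : Set α), f x = f a + f b := by
  classical
  have := Finset.tsum_subtype ({a, b} : Finset α) f
  rw [Finset.sum_pair h] at this
  rw [← this]
  apply tsum_congr_set_coe
  ext z
  show z ∈ ({a, b} : Set α) ↔ z ∈ ({a, b} : Finset α)
  simp

/-- Auxiliary: every state has p(w,w) = 1. -/
lemma self_one (p : Ω → Ω → ℝ) (h1 : Symm p) (h3 : Bounded p) (h4 : OProj p)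
    (w : Ω) : p w w = 1 := by
  have hortho : IsOrtho p ({w} : Set Ω) := by
    intro a ha b hb hab
    rcases ha with rfl
    rcases hb with rfl
    exact absurd rfl hab
  have hsingle : pSet p w ({w} : Set Ω) = p w w := tsum_singleton w (p w)
  have hle : p w w ≤ 1 := by
    have := (h3 w {w} hortho).2
    rwa [hsingle] at this
  rcases lt_or_eq_of_le hle with hlt | heq
  · exfalso
    have hlt' : pSet p w ({w} : Set Ω) < 1 := by rwa [hsingle]
    obtain ⟨v, hv0, hv1⟩ := h4 w {w} hortho hlt'
    have hv0' : p v w = 0 := (tsum_singleton w (p v)).symm.trans hv0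
    have hwv : p w v = 0 := by rw [h1 w v]; exact hv0'
    rw [hsingle, hwv] at hv1
    linarith
  · exact heq

theorem stmt10 (p : Ω → Ω → ℝ) (h1 : Symm p) (h2 : Nonneg p) (h3 : Bounded p)
    (h4 : OProj p) (h5 : Factor p) (x x' y : Ω) (A : Set Ω)
    (hxx' : p x x' < 1) (hyx' : p y x' = 0) (hsum : p x x' + p x y = 1)
    (hA : IsOrtho p A) (hxA : pSet p x A = 0) (hx'A : pSet p x' A = 0) :
    pSet p y A = 0 := by
  have hyy : p y y = 1 := self_one p h1 h3 h4 y
  have hne : x' ≠ y := by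
    intro h; rw [h] at hyx'; rw [h1 y y] at hyx'; rw [hyy] at hyx'; norm_num at hyx'
  -- the ortho set C = {x', y}
  set C : Set Ω := {x', y} with hC
  have hCortho : IsOrtho p C := by
    intro a ha b hb hab
    rcases ha with rfl | ha
    · rcases hb with rfl | hb
      · exact absurd rfl hab
      · rcases hb with rfl; rw [h1]; exact hyx'
    · rcases ha with rfl
      rcases hb with rfl | hb
      · exact hyx'
      · rcases hb with rfl; exact absurd rfl hab
  have hpair : ∀ u : Ω, pSet p u C = p u x' + p u y := fun u =>
    tsum_pair' (p u) hne
  have hyC : pSet p y C = 1 := by rw [hpair, hyx', hyy]; ring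
  have hxC : pSet p x C = 1 := by rw [hpair]; exact hsum
  -- each element of A is orthogonal to x and to x'
  have hsummx := (h3 x A hA).1
  have hsummx' := (h3 x' A hA).1
  have hxa : ∀ a ∈ A, p x a = 0 := by
    intro a ha
    have hle : p x a ≤ pSet p x A := Summable.le_tsum hsummx ⟨a, ha⟩ (fun b _ => h2 x b)
    rw [hxA] at hle
    exact le_antisymm hle (h2 x a)
  have hx'a : ∀ a ∈ A, p x' a = 0 := by
    intro a ha
    have hle : p x' a ≤ pSet p x' A := Summable.le_tsum hsummx' ⟨a, ha⟩ (fun b _ => h2 x' b)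
    rw [hx'A] at hle
    exact le_antisymm hle (h2 x' a)
  -- key step: for each a ∈ A, p y a = 0
  have hya : ∀ a ∈ A, p y a = 0 := by
    intro a ha
    have haC : p a y = pSet p a C := by
      rw [hpair, h1 a x', hx'a a ha, zero_add]
    have hfac : p a x = p a y * p y x := h5 a y x C hCortho hyC hxC haC
    have hax : p a x = 0 := by rw [h1]; exact hxa a ha
    have hyx : p y x ≠ 0 := by
      rw [h1 y x]
      intro h
      rw [h] at hsum
      linarith
    rw [hax] at hfac
    have : p a y = 0 := by
      rcases mul_eq_zero.mp hfac.symm with h | h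
      · exact h
      · exact absurd h hyx
    rw [h1]; exact this
  -- conclude
  have : ∀ a : A, p y (a : Ω) = 0 := fun a => hya a a.2
  calc pSet p y A = ∑' a : A, p y (a : Ω) := rfl
    _ = ∑' _ : A, (0 : ℝ) := tsum_congr this
    _ = 0 := tsum_zero
end

section
/- In an SP-structure satisfying Symmetry, Non-negativity, Boundedness, O-Projection, and Factorization, for ortho-sets A and B the following are equivalent: (1) Ā ⊆ B̄; (2) A ⊆ B̄; (3) p(x,A) ≤ p(x,B) for every state x. -/
variable {Ω : Type*}

lemma ortho_singleton (p : Ω → Ω → ℝ) (y : Ω) : IsOrtho p {y} := by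
  intro a ha b hb hab
  simp only [Set.mem_singleton_iff] at ha hb
  exact absurd (ha.trans hb.symm) hab

lemma pSet_union (p : Ω → Ω → ℝ) (x : Ω) {S : Set Ω} {y : Ω} (hy : y ∉ S)
    (hS : Summable (fun a : S => p x a)) :
    pSet p x (S ∪ {y}) = pSet p x S + p x y := by
  unfold pSet
  rw [Summable.tsum_union_disjoint (Set.disjoint_singleton_right.mpr hy) hS
    (by exact (Set.finite_singleton y).summable _)]
  rw [tsum_singleton y (p x)]

lemma mem_ortho_one (p : Ω → Ω → ℝ) (h1 : Symm p) (h2 : Nonneg p) (h3 : Bounded p)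
    (h4 : OProj p) {A : Set Ω} (hA : IsOrtho p A) {a : Ω} (ha : a ∈ A) :
    pSet p a A = 1 := by
  refine le_antisymm ((h3 a A hA).2) ?_
  have := Summable.le_tsum (h3 a A hA).1 ⟨a, ha⟩ (fun j _ => h2 a j)
  calc (1:ℝ) = p a a := (self_one p h1 h3 h4 a).symm
    _ ≤ ∑' b : A, p a b := this
    _ = pSet p a A := rfl

lemma term_eq_zero (p : Ω → Ω → ℝ) (h2 : Nonneg p) {A : Set Ω} (hA : IsOrtho p A)
    (h3 : Bounded p) {y : Ω} (hy : pSet p y A = 0) {b : Ω} (hb : b ∈ A) : p y b = 0 := by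
  have := Summable.le_tsum (h3 y A hA).1 ⟨b, hb⟩ (fun j _ => h2 y j)
  have h0 : (∑' c : A, p y c) = 0 := hy
  exact le_antisymm (h0 ▸ this) (h2 y b)

lemma key_le (p : Ω → Ω → ℝ) (h1 : Symm p) (h2 : Nonneg p) (h3 : Bounded p)
    (h4 : OProj p) {A B : Set Ω} (hA : IsOrtho p A) (hB : IsOrtho p B)
    (hAB : A ⊆ Subgen p B) (x : Ω) : pSet p x A ≤ pSet p x B := by
  rcases lt_or_eq_of_le (h3 x B hB).2 with hlt | heq
  · obtain ⟨y, hy0, hsum⟩ := h4 x B hB hlt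
    have hyB : ∀ b ∈ B, p y b = 0 := fun b hb => term_eq_zero p h2 hB h3 hy0 hb
    have hynB : y ∉ B := by
      intro hyb
      have := hyB y hyb
      rw [self_one p h1 h3 h4 y] at this
      exact one_ne_zero this
    have hynA : y ∉ A := by
      intro hya
      have := hAB hya
      rw [Subgen, Set.mem_setOf_eq] at this
      -- pSet p y B = 1 but all terms are 0
      have hz : pSet p y B = 0 := hy0
      rw [this] at hz
      exact one_ne_zero hz
    -- B ∪ {y} is ortho
    have hBy : IsOrtho p (B ∪ {y}) := by
      intro a ha b hb hab
      rcases ha with ha | ha <;> rcases hb with hb | hb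
      · exact hB a ha b hb hab
      · rw [Set.mem_singleton_iff] at hb; subst hb
        rw [h1]; exact hyB a ha
      · rw [Set.mem_singleton_iff] at ha; subst ha
        exact hyB b hb
      · rw [Set.mem_singleton_iff] at ha hb
        exact absurd (ha.trans hb.symm) hab
    -- each a ∈ A is orthogonal to y
    have haY : ∀ a ∈ A, p a y = 0 := by
      intro a ha
      have hle := (h3 a (B ∪ {y}) hBy).2
      rw [pSet_union p a hynB (h3 a B hB).1] at hle
      have haB : pSet p a B = 1 := hAB ha
      rw [haB] at hle
      have : p a y ≤ 0 := by linarith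
      exact le_antisymm this (h2 a y)
    -- A ∪ {y} is ortho
    have hAy : IsOrtho p (A ∪ {y}) := by
      intro a ha b hb hab
      rcases ha with ha | ha <;> rcases hb with hb | hb
      · exact hA a ha b hb hab
      · rw [Set.mem_singleton_iff] at hb; subst hb
        exact haY a ha
      · rw [Set.mem_singleton_iff] at ha; subst ha
        rw [h1]; exact haY b hb
      · rw [Set.mem_singleton_iff] at ha hb
        exact absurd (ha.trans hb.symm) hab
    have hle := (h3 x (A ∪ {y}) hAy).2
    rw [pSet_union p x hynA (h3 x A hA).1] at hle
    linarith
  · rw [heq]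
    exact (h3 x A hA).2

theorem stmt14 (p : Ω → Ω → ℝ) (h1 : Symm p) (h2 : Nonneg p) (h3 : Bounded p)
    (h4 : OProj p) (h5 : Factor p) (A B : Set Ω)
    (hA : IsOrtho p A) (hB : IsOrtho p B) :
    (Subgen p A ⊆ Subgen p B ↔ A ⊆ Subgen p B) ∧
    (A ⊆ Subgen p B ↔ ∀ x : Ω, pSet p x A ≤ pSet p x B) := by
  have hASub : A ⊆ Subgen p A := fun a ha => mem_ortho_one p h1 h2 h3 h4 hA ha
  have h23 : A ⊆ Subgen p B → ∀ x : Ω, pSet p x A ≤ pSet p x B :=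
    fun hAB x => key_le p h1 h2 h3 h4 hA hB hAB x
  have h31 : (∀ x : Ω, pSet p x A ≤ pSet p x B) → Subgen p A ⊆ Subgen p B := by
    intro h x hx
    rw [Subgen, Set.mem_setOf_eq] at hx ⊢
    exact le_antisymm (h3 x B hB).2 (hx ▸ h x)
  constructor
  · exact ⟨fun h => hASub.trans h, fun h => h31 (h23 h)⟩
  · exact ⟨h23, fun h a ha => h31 h (hASub ha)⟩
end

section
/- Let S = (Ω,p) be a standard SP-structure, B a basis for S, and f : S → S an isomorphism fixing every element of B. Then for every subset A ⊆ B with generated subspace X: (1) p(x,X) = p(f(x),X) for every state x; (2) f(X) = X; (3) if p(x,X) > 0 then t(f(x),X) = f(t(x,X)). -/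
variable {Ω : Type*}

theorem stmt19 (p : Ω → Ω → ℝ) (h1 : Symm p) (h2 : Nonneg p) (h3 : Bounded p)
    (h4 : OProj p) (h5 : Factor p) (hstd : Standard p)
    (B : Set Ω) (hB : IsOrtho p B) (hbasis : ∀ x : Ω, pSet p x B = 1)
    (f : Ω → Ω) (hbij : Function.Bijective f)
    (hpres : ∀ a b : Ω, p (f a) (f b) = p a b)
    (hfix : ∀ b ∈ B, f b = b)
    (A : Set Ω) (hAB : A ⊆ B) :
    (∀ x : Ω, pSet p (f x) A = pSet p x A) ∧
    f '' Subgen p A = Subgen p A ∧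
    (∀ x : Ω, 0 < pSet p x A →
      ∀ y y' : Ω, (y ∈ Subgen p A ∧ p x y = pSet p x A) →
        (y' ∈ Subgen p A ∧ p (f x) y' = pSet p (f x) A) → y' = f y) := by
  have hA : IsOrtho p A := fun x hx y hy hxy => hB x (hAB hx) y (hAB hy) hxy
  have key : ∀ x : Ω, pSet p (f x) A = pSet p x A := by
    intro x
    unfold pSet
    apply tsum_congr
    intro a
    calc p (f x) ↑a = p (f x) (f ↑a) := by rw [hfix ↑a (hAB a.2)]
      _ = p x ↑a := hpres x ↑a
  refine ⟨key, ?_, ?_⟩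
  · ext y
    constructor
    · rintro ⟨x, hx, rfl⟩
      show pSet p (f x) A = 1
      rw [key]; exact hx
    · intro hy
      obtain ⟨x, rfl⟩ := hbij.2 y
      exact ⟨x, by simpa [Subgen, key x] using hy, rfl⟩
  · intro x hx y y' ⟨hy1, hy2⟩ ⟨hy'1, hy'2⟩
    have hfy1 : pSet p (f y) A = 1 := by rw [key]; exact hy1
    have hfy2 : p (f x) (f y) = pSet p (f x) A := by rw [hpres, key]; exact hy2
    have hfac := h5 (f x) (f y) y' A hA hfy1 hy'1 hfy2
    rw [hy'2, hfy2, key] at hfac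
    have : p (f y) y' = 1 := by
      have h1 : pSet p x A * 1 = pSet p x A * p (f y) y' := by linarith
      exact (mul_left_cancel₀ hx.ne' h1).symm
    exact (hstd (f y) y' this).symm
end
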